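/- On the 4-point space V = {1,2,3,4} with K given by K(1,1)=K(1,2)=K(2,1)=K(2,3)=K(3,2)=K(3,4)=1/2, K(4,3)=1 (all other entries 0), and g the transposition of 3 and 4, the chain driven by the alternating sequence K_1 = K, K_2(x,y) = K(gx,gy) satisfies K_{0,2n}(4,4) = 1 and K_{0,2n+1}(4,3) = 1 for all n ≥ 0. -/

import Mathlib

open BigOperators Finset

def Kseq {V : Type*} [Fintype V] (K : Matrix V V ℝ) (g : Equiv.Perm V) (i : ℕ) :
    Matrix V V ℝ :=
  Matrix.of fun x y => K ((g ^ (i - 1)) x) ((g ^ (i - 1)) y)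

def Kcomp {V : Type*} [Fintype V] [DecidableEq V] (K : Matrix V V ℝ) (g : Equiv.Perm V) :
    ℕ → Matrix V V ℝ
  | 0 => 1
  | n + 1 => Kcomp K g n * Kseq K g (n + 1)

def tilde {V : Type*} [Fintype V] (K : Matrix V V ℝ) (g : Equiv.Perm V) : Matrix V V ℝ :=
  Matrix.of fun x y => K x (g.symm y)

/-- The kernel of Example 3.5 on the four-point space {1,2,3,4} (here Fin 4,
with 0,1,2,3 standing for the states 1,2,3,4). -/
noncomputable def K4 : Matrix (Fin 4) (Fin 4) ℝ :=
  !![1/2, 1/2, 0, 0;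
     1/2, 0, 1/2, 0;
     0, 1/2, 0, 1/2;
     0, 0, 1, 0]

/-- The bijection g transposing the states 3 and 4 (indices 2 and 3). -/
def g4 : Equiv.Perm (Fin 4) := Equiv.swap 2 3

lemma g4_sq : g4 * g4 = 1 := Equiv.swap_mul_self 2 3

lemma g4_pow_even (n : ℕ) : g4 ^ (2 * n) = 1 := by
  rw [pow_mul, pow_two, g4_sq, one_pow]

lemma g4_pow_odd (n : ℕ) : g4 ^ (2 * n + 1) = g4 := by
  rw [pow_succ, g4_pow_even, one_mul]

lemma K4row3 : K4 3 0 = 0 ∧ K4 3 1 = 0 ∧ K4 3 2 = 1 ∧ K4 3 3 = 0 := by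
  exact ⟨rfl, rfl, rfl, rfl⟩

lemma K4row2 : K4 2 0 = 0 ∧ K4 2 1 = 1/2 ∧ K4 2 2 = 0 ∧ K4 2 3 = 1/2 := by
  exact ⟨rfl, rfl, rfl, rfl⟩

lemma rows : ∀ n : ℕ,
    (Kcomp K4 g4 (2 * n) 3 0 = 0 ∧ Kcomp K4 g4 (2 * n) 3 1 = 0 ∧
     Kcomp K4 g4 (2 * n) 3 2 = 0 ∧ Kcomp K4 g4 (2 * n) 3 3 = 1) ∧
    (Kcomp K4 g4 (2 * n + 1) 3 0 = 0 ∧ Kcomp K4 g4 (2 * n + 1) 3 1 = 0 ∧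
     Kcomp K4 g4 (2 * n + 1) 3 2 = 1 ∧ Kcomp K4 g4 (2 * n + 1) 3 3 = 0) := by
  intro n
  induction n with
  | zero =>
    have h0 : Kcomp K4 g4 0 = 1 := rfl
    have hodd : ∀ y : Fin 4, Kcomp K4 g4 (2 * 0 + 1) 3 y = K4 3 y := by
      intro y
      show (Kcomp K4 g4 0 * Kseq K4 g4 1) 3 y = _
      rw [h0, Matrix.one_mul]
      show K4 ((g4 ^ 0) 3) ((g4 ^ 0) y) = _
      simp [pow_zero]
    refine ⟨⟨?_, ?_, ?_, ?_⟩, ?_, ?_, ?_, ?_⟩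
    · show (1 : Matrix (Fin 4) (Fin 4) ℝ) 3 0 = 0; simp [Matrix.one_apply]
    · show (1 : Matrix (Fin 4) (Fin 4) ℝ) 3 1 = 0; simp [Matrix.one_apply]
    · show (1 : Matrix (Fin 4) (Fin 4) ℝ) 3 2 = 0; simp [Matrix.one_apply]
    · show (1 : Matrix (Fin 4) (Fin 4) ℝ) 3 3 = 1; simp [Matrix.one_apply]
    · rw [hodd 0]; exact K4row3.1
    · rw [hodd 1]; exact K4row3.2.1
    · rw [hodd 2]; exact K4row3.2.2.1
    · rw [hodd 3]; exact K4row3.2.2.2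
  | succ n ih =>
    obtain ⟨⟨a0, a1, a2, a3⟩, b0, b1, b2, b3⟩ := ih
    have hKseqE : ∀ z y : Fin 4, Kseq K4 g4 (2 * n + 1 + 1) z y = K4 (g4 z) (g4 y) := by
      intro z y
      show K4 ((g4 ^ (2 * n + 1)) z) ((g4 ^ (2 * n + 1)) y) = _
      rw [g4_pow_odd]
    have hA : ∀ y : Fin 4, Kcomp K4 g4 (2 * (n + 1)) 3 y = K4 3 (g4 y) := by
      intro y
      have h1 : 2 * (n + 1) = 2 * n + 1 + 1 := by ring
      rw [h1]
      show (Kcomp K4 g4 (2 * n + 1) * Kseq K4 g4 (2 * n + 1 + 1)) 3 y = _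
      rw [Matrix.mul_apply, Fin.sum_univ_four, b0, b1, b2, b3, hKseqE, hKseqE, hKseqE, hKseqE]
      have hg2 : g4 2 = 3 := by decide
      rw [hg2]
      ring
    have hKseqO : ∀ z y : Fin 4, Kseq K4 g4 (2 * (n + 1) + 1) z y = K4 z y := by
      intro z y
      show K4 ((g4 ^ (2 * (n + 1))) z) ((g4 ^ (2 * (n + 1))) y) = _
      rw [g4_pow_even]
      rfl
    have hA0 : Kcomp K4 g4 (2 * (n + 1)) 3 0 = 0 := by
      rw [hA 0, show g4 0 = 0 from by decide]; exact K4row3.1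
    have hA1 : Kcomp K4 g4 (2 * (n + 1)) 3 1 = 0 := by
      rw [hA 1, show g4 1 = 1 from by decide]; exact K4row3.2.1
    have hA2 : Kcomp K4 g4 (2 * (n + 1)) 3 2 = 0 := by
      rw [hA 2, show g4 2 = 3 from by decide]; exact K4row3.2.2.2
    have hA3 : Kcomp K4 g4 (2 * (n + 1)) 3 3 = 1 := by
      rw [hA 3, show g4 3 = 2 from by decide]; exact K4row3.2.2.1
    have hB : ∀ y : Fin 4, Kcomp K4 g4 (2 * (n + 1) + 1) 3 y = K4 3 y := by
      intro y
      show (Kcomp K4 g4 (2 * (n + 1)) * Kseq K4 g4 (2 * (n + 1) + 1)) 3 y = _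
      rw [Matrix.mul_apply, Fin.sum_univ_four, hA0, hA1, hA2, hA3,
        hKseqO, hKseqO, hKseqO, hKseqO]
      ring
    refine ⟨⟨hA0, hA1, hA2, hA3⟩, ?_, ?_, ?_, ?_⟩
    · rw [hB 0]; exact K4row3.1
    · rw [hB 1]; exact K4row3.2.1
    · rw [hB 2]; exact K4row3.2.2.1
    · rw [hB 3]; exact K4row3.2.2.2

/-- Example 3.5: K_{0,2n}(4,4) = 1 and K_{0,2n+1}(4,3) = 1 for all n ≥ 0. -/
theorem stmt12 :
    ∀ n : ℕ, Kcomp K4 g4 (2 * n) 3 3 = 1 ∧ Kcomp K4 g4 (2 * n + 1) 3 2 = 1 := by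
  intro n
  exact ⟨(rows n).1.2.2.2, (rows n).2.2.2.1⟩
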